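/- Let (R, m) be a commutative noetherian local ring and let M be an arbitrary R-module. Then the primes maximal (with respect to inclusion) in Ass_R(D(M)) are exactly the primes maximal in Att_R(M): a prime ideal p is a maximal element of the set Ass_R(D(M)) if and only if p is a maximal element of the set Att_R(M). -/

import Mathlib

/-- `attachedPrimes R M` is the set of prime ideals `p` of `R` attached to the `R`-module `M`,
i.e. such that `p` is the annihilator of some quotient of `M`. -/
def attachedPrimes (R : Type*) [CommRing R] (M : Type*) [AddCommGroup M] [Module R M] :
    Set (Ideal R) :=
  {p | p.IsPrime ∧ ∃ U : Submodule R M, p = Module.annihilator R (M ⧸ U)}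

/-- The annihilator of an element `φ` of `Hom(M, E)` is the annihilator of `M ⧸ ker φ`. -/
lemma ann_span_eq {R : Type} [CommRing R] {M E : Type} [AddCommGroup M] [Module R M]
    [AddCommGroup E] [Module R E] (φ : M →ₗ[R] E) :
    (Submodule.span R {φ}).annihilator = Module.annihilator R (M ⧸ LinearMap.ker φ) := by
  ext r
  rw [Submodule.mem_annihilator_span_singleton, Module.mem_annihilator]
  constructor
  · intro h n
    obtain ⟨m, rfl⟩ := Submodule.mkQ_surjective _ n
    have : (r • φ) m = 0 := by rw [h]; rfl
    have hm : φ (r • m) = 0 := by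
      simpa [LinearMap.smul_apply, map_smul] using this
    have : r • m ∈ LinearMap.ker φ := hm
    rw [← map_smul, Submodule.mkQ_apply, Submodule.Quotient.mk_eq_zero]
    exact this
  · intro h
    ext m
    have := h (Submodule.mkQ _ m)
    rw [← map_smul, Submodule.mkQ_apply, Submodule.Quotient.mk_eq_zero] at this
    simpa [LinearMap.smul_apply, map_smul] using this

/-- Over a local ring, an injective module containing the residue field cogenerates:
for any nonzero element of any module there is a functional not vanishing on it. -/
lemma exists_functional {R : Type} [CommRing R] [IsLocalRing R]
    {E : Type} [AddCommGroup E] [Module R E] (hE : Module.Injective R E)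
    (f : (R ⧸ IsLocalRing.maximalIdeal R) →ₗ[R] E) (hf : Function.Injective f)
    {N : Type} [AddCommGroup N] [Module R N] (x : N) (hx : x ≠ 0) :
    ∃ φ : N →ₗ[R] E, φ x ≠ 0 := by
  set g : R →ₗ[R] N := LinearMap.toSpanSingleton R N x with hg
  have hker : LinearMap.ker g ≤ IsLocalRing.maximalIdeal R := by
    apply IsLocalRing.le_maximalIdeal
    intro h
    apply hx
    have : (1 : R) ∈ LinearMap.ker g := h ▸ Submodule.mem_top
    simpa [hg, LinearMap.toSpanSingleton_apply] using this
  -- the map R → E, r ↦ f (r mod m)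
  set h0 : R →ₗ[R] E := f ∘ₗ (IsLocalRing.maximalIdeal R).mkQ with hh0
  have hker' : LinearMap.ker g ≤ LinearMap.ker h0 := by
    intro r hr
    have : Submodule.mkQ (IsLocalRing.maximalIdeal R) r = 0 := by
      rw [Submodule.mkQ_apply, Submodule.Quotient.mk_eq_zero]
      exact hker hr
    simp [hh0, LinearMap.mem_ker, LinearMap.comp_apply, this]
  set lift : (R ⧸ LinearMap.ker g) →ₗ[R] E := Submodule.liftQ _ h0 hker' with hlift
  set e := LinearMap.quotKerEquivRange g with he
  set g' : (LinearMap.range g) →ₗ[R] E := lift ∘ₗ e.symm.toLinearMap with hg'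
  obtain ⟨φ, hφ⟩ := hE.out (LinearMap.range g).subtype (Submodule.injective_subtype _) g'
  have hxmem : x ∈ LinearMap.range g := ⟨1, by simp [hg, LinearMap.toSpanSingleton_apply]⟩
  refine ⟨φ, ?_⟩
  have h1 : φ x = g' ⟨x, hxmem⟩ := hφ ⟨x, hxmem⟩
  have h2 : e.symm ⟨x, hxmem⟩ = Submodule.Quotient.mk 1 := by
    rw [LinearEquiv.symm_apply_eq]
    apply Subtype.ext
    have := LinearMap.quotKerEquivRange_apply_mk g (1 : R)
    rw [he, this]
    show x = g 1
    rw [hg, LinearMap.toSpanSingleton_apply, one_smul]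
  rw [h1, hg', LinearMap.comp_apply]
  rw [LinearEquiv.coe_coe, h2]
  have h3 : lift (Submodule.Quotient.mk 1) = f (Ideal.Quotient.mk _ 1) := by
    simp [hlift, hh0]
    rfl
  rw [h3]
  intro h4
  have h5 : (Ideal.Quotient.mk (IsLocalRing.maximalIdeal R) 1) = 0 := by
    apply hf
    rw [h4, map_zero]
  rw [Ideal.Quotient.eq_zero_iff_mem] at h5
  exact (IsLocalRing.maximalIdeal.isMaximal R).ne_top (Ideal.eq_top_of_isUnit_mem _ h5 isUnit_one)

lemma colon_bot_eq_ann {R : Type} [CommRing R] {N : Type} [AddCommGroup N] [Module R N]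
    (x : N) : (⊥ : Submodule R N).colon {x} = (Submodule.span R {x}).annihilator := by
  ext r
  rw [Submodule.mem_colon_singleton, Submodule.mem_bot, Submodule.mem_annihilator_span_singleton]

/-- Every associated prime of the Matlis dual is attached. -/
lemma ass_subset_att {R : Type} [CommRing R] [IsNoetherianRing R] {M E : Type} [AddCommGroup M] [Module R M]
    [AddCommGroup E] [Module R E] {p : Ideal R}
    (hp : p ∈ associatedPrimes R (M →ₗ[R] E)) : p ∈ attachedPrimes R M := by
  obtain ⟨hprime, φ, hφ⟩ := isAssociatedPrime_iff.mp hp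
  exact ⟨hprime, LinearMap.ker φ, by rw [hφ, colon_bot_eq_ann, ann_span_eq]⟩

/-- Every attached prime is contained in an associated prime of the Matlis dual. -/
lemma att_le_ass {R : Type} [CommRing R] [IsNoetherianRing R] [IsLocalRing R]
    {M E : Type} [AddCommGroup M] [Module R M]
    [AddCommGroup E] [Module R E] (hE : Module.Injective R E)
    (f : (R ⧸ IsLocalRing.maximalIdeal R) →ₗ[R] E) (hf : Function.Injective f)
    {p : Ideal R} (hp : p ∈ attachedPrimes R M) :
    ∃ q ∈ associatedPrimes R (M →ₗ[R] E), p ≤ q := by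
  obtain ⟨hprime, U, hU⟩ := hp
  -- the quotient is nontrivial since p is a proper ideal
  have hnontriv : ∃ n : M ⧸ U, n ≠ 0 := by
    by_contra h
    push_neg at h
    apply hprime.ne_top
    rw [hU, Ideal.eq_top_iff_one, Module.mem_annihilator]
    intro n
    rw [h n, smul_zero]
  obtain ⟨n, hn⟩ := hnontriv
  obtain ⟨ψ, hψ⟩ := exists_functional hE f hf n hn
  have hψ0 : ψ ≠ 0 := fun h => hψ (by rw [h]; rfl)
  obtain ⟨q, hq, hle⟩ := exists_le_isAssociatedPrime_of_isNoetherianRing R ψ hψ0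
  -- p annihilates ψ
  have hpψ : p ≤ (Submodule.span R {ψ}).annihilator := by
    intro r hr
    rw [Submodule.mem_annihilator_span_singleton]
    have hr' : r ∈ Module.annihilator R (M ⧸ U) := by rw [← hU]; exact hr
    ext m
    show r • ψ (Submodule.Quotient.mk m) = 0
    rw [← map_smul, Module.mem_annihilator.mp hr' (Submodule.Quotient.mk m), map_zero]
  -- transfer q along the injection Hom(M⧸U, E) ↪ Hom(M, E)
  have hinj : Function.Injective (LinearMap.lcomp R E U.mkQ :
      ((M ⧸ U) →ₗ[R] E) →ₗ[R] (M →ₗ[R] E)) := by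
    intro a b hab
    refine LinearMap.ext fun m => ?_
    obtain ⟨m', rfl⟩ := Submodule.mkQ_surjective U m
    exact congrArg (fun ρ => ρ m') hab
  exact ⟨q, hq.map_of_injective _ hinj, le_trans hpψ (colon_bot_eq_ann (R := R) ψ ▸ hle)⟩

/-- over a noetherian local ring, the maximal elements of `Ass_R(D(M))` and of
`Att_R(M)` coincide, where `D(M) = Hom_R(M, E)` is the Matlis dual with respect to an
injective hull `E` of `R/m`. -/
theorem stmt2 (R : Type) [CommRing R] [IsNoetherianRing R] [IsLocalRing R]
    (M : Type) [AddCommGroup M] [Module R M]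
    -- `E` is an injective hull of the residue field `R ⧸ m`:
    (E : Type) [AddCommGroup E] [Module R E] (hE : Module.Injective R E)
    (f : (R ⧸ IsLocalRing.maximalIdeal R) →ₗ[R] E) (hf : Function.Injective f)
    (hess : ∀ U : Submodule R E, U ≠ ⊥ → U ⊓ LinearMap.range f ≠ ⊥)
    (p : Ideal R) :
    (p ∈ associatedPrimes R (M →ₗ[R] E) ∧
        ∀ q ∈ associatedPrimes R (M →ₗ[R] E), p ≤ q → p = q) ↔
      (p ∈ attachedPrimes R M ∧ ∀ q ∈ attachedPrimes R M, p ≤ q → p = q) := by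
  constructor
  · rintro ⟨hp, hmax⟩
    refine ⟨ass_subset_att hp, fun q hq hpq => ?_⟩
    obtain ⟨q', hq', hqq'⟩ := att_le_ass hE f hf hq
    have := hmax q' hq' (le_trans hpq hqq')
    exact le_antisymm hpq (this ▸ hqq')
  · rintro ⟨hp, hmax⟩
    obtain ⟨q, hq, hpq⟩ := att_le_ass hE f hf hp
    have hpeq : p = q := hmax q (ass_subset_att hq) hpq
    subst hpeq
    exact ⟨hq, fun q' hq' hpq' => hmax q' (ass_subset_att hq') hpq'⟩
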